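/- For finite-dimensional vector spaces U and V over a field of characteristic zero, the dimension of Λⁿ(U⊗V) equals dim(U⊗V) choose n, and moreover in the special case n = 2 one has Λ²(U⊗V) ≅ (Sym²U ⊗ Λ²V) ⊕ (Λ²U ⊗ Sym²V). -/

import Mathlib

open TensorProduct

/-- The second symmetric power `Sym²U` of a module, as the quotient of `U ⊗ U` by the span of
the elements `u ⊗ v - v ⊗ u`. -/
def SymSq (k U : Type*) [CommRing k] [AddCommGroup U] [Module k U] : Type _ :=
  (U ⊗[k] U) ⧸
    (Submodule.span k {x : U ⊗[k] U | ∃ u v : U, x = u ⊗ₜ[k] v - v ⊗ₜ[k] u})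

noncomputable instance (k U : Type*) [CommRing k] [AddCommGroup U] [Module k U] :
    AddCommGroup (SymSq k U) :=
  Submodule.Quotient.addCommGroup _

noncomputable instance (k U : Type*) [CommRing k] [AddCommGroup U] [Module k U] :
    Module k (SymSq k U) :=
  Submodule.Quotient.module _

section ExtDim

open ExteriorAlgebra

variable {k : Type*} [Field k] {M : Type*} [AddCommGroup M] [Module k M]

/-- The family of wedge products of basis vectors indexed by `n`-element subsets. -/
noncomputable def extFam {d n : ℕ} (b : Module.Basis (Fin d) k M)
    (s : {s : Finset (Fin d) // s.card = n}) : ExteriorAlgebra k M :=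
  ιMulti k n (fun i => b (s.1.orderEmbOfFin s.2 i))

lemma extFam_li {d n : ℕ} (b : Module.Basis (Fin d) k M) :
    LinearIndependent k (extFam (n := n) b) := by
  classical
  rw [Fintype.linearIndependent_iff]
  intro g hg s₀
  set P : M →ₗ[k] (Fin n → k) :=
    LinearMap.pi (fun i => b.coord (s₀.1.orderEmbOfFin s₀.2 i)) with hP
  set φ : M [⋀^Fin n]→ₗ[k] k := ((Pi.basisFun k (Fin n)).det).compLinearMap P with hφ
  set F : ∀ i, M [⋀^Fin i]→ₗ[k] k := fun i => if h : i = n then h ▸ φ else 0 with hF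
  have hFn : F n = φ := by simp [hF, hφ]
  have key : ∀ s, liftAlternating F (extFam b s) = if s = s₀ then 1 else 0 := by
    intro s
    rw [extFam, liftAlternating_apply_ιMulti, hFn, AlternatingMap.compLinearMap_apply,
      Module.Basis.det_apply]
    have hmat : ∀ i j, (Pi.basisFun k (Fin n)).toMatrix
        (fun j => P (b (s.1.orderEmbOfFin s.2 j))) i j
        = if s.1.orderEmbOfFin s.2 j = s₀.1.orderEmbOfFin s₀.2 i then 1 else 0 := by
      intro i j
      rw [Module.Basis.toMatrix_apply, Pi.basisFun_repr, hP, LinearMap.pi_apply, Module.Basis.coord_apply,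
        Module.Basis.repr_self, Finsupp.single_apply]
    by_cases hss : s = s₀
    · subst hss
      rw [if_pos rfl]
      have : ((Pi.basisFun k (Fin n)).toMatrix
          (fun j => P (b (s.1.orderEmbOfFin s.2 j)))) = 1 := by
        ext i j
        rw [hmat i j, Matrix.one_apply]
        by_cases h : i = j
        · subst h; simp
        · rw [if_neg h, if_neg (fun hc => h ((s.1.orderEmbOfFin s.2).injective hc).symm)]
      rw [this, Matrix.det_one]
    · rw [if_neg hss]
      have hns : ¬ s₀.1 ⊆ s.1 := by
        intro hsub
        exact hss (Subtype.ext (Finset.eq_of_subset_of_card_le hsub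
          (by rw [s.2, s₀.2])).symm)
      obtain ⟨x, hx₀, hxs⟩ := Finset.not_subset.mp hns
      have : x ∈ Set.range (s₀.1.orderEmbOfFin s₀.2) := by
        rw [Finset.range_orderEmbOfFin]; exact hx₀
      obtain ⟨i₀, hi₀⟩ := this
      apply Matrix.det_eq_zero_of_row_eq_zero i₀
      intro j
      rw [hmat i₀ j, hi₀, if_neg]
      intro hc
      exact hxs (hc ▸ Finset.orderEmbOfFin_mem s.1 s.2 j)
  have h0 := congrArg (liftAlternating F) hg
  rw [map_sum, map_zero] at h0
  simp only [map_smul, key, smul_eq_mul, mul_ite, mul_one, mul_zero] at h0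
  rw [Finset.sum_ite_eq' Finset.univ s₀ g] at h0
  simpa using h0

lemma extFam_span {d n : ℕ} (b : Module.Basis (Fin d) k M) :
    Submodule.span k (Set.range (extFam (n := n) b)) = ⋀[k]^n M := by
  classical
  apply le_antisymm
  · rw [Submodule.span_le]
    rintro _ ⟨s, rfl⟩
    exact ιMulti_range k n (Set.mem_range_self _)
  · rw [← ιMulti_span_fixedDegree, Submodule.span_le]
    rintro _ ⟨v, rfl⟩
    have hv : v = fun j => ∑ i : Fin d, b.repr (v j) i • b i :=
      funext fun j => (b.sum_repr (v j)).symm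
    rw [show (ιMulti k n v : ExteriorAlgebra k M)
        = (ιMulti k n).toMultilinearMap (fun j => ∑ i : Fin d, b.repr (v j) i • b i) by
      rw [AlternatingMap.coe_multilinearMap]; exact congrArg _ hv]
    rw [MultilinearMap.map_sum]
    apply Submodule.sum_mem
    intro r _
    rw [MultilinearMap.map_smul_univ, AlternatingMap.coe_multilinearMap]
    apply Submodule.smul_mem
    by_cases hr : Function.Injective r
    · set s : Finset (Fin d) := Finset.univ.image r with hs
      have hcard : s.card = n := by
        rw [hs, Finset.card_image_of_injective _ hr, Finset.card_univ, Fintype.card_fin]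
      have hmem : ∀ i, r i ∈ s := fun i => by
        rw [hs]; exact Finset.mem_image_of_mem r (Finset.mem_univ i)
      set σ : Fin n → Fin n :=
        fun i => (s.orderIsoOfFin hcard).symm ⟨r i, hmem i⟩ with hσ
      have hσinj : Function.Injective σ := by
        intro a b' hab
        simp only [hσ] at hab
        have h2 : (⟨r a, hmem a⟩ : {x // x ∈ s}) = ⟨r b', hmem b'⟩ :=
          (s.orderIsoOfFin hcard).symm.injective hab
        exact hr (congrArg Subtype.val h2)
      have hσbij : Function.Bijective σ := Finite.injective_iff_bijective.mp hσinj
      set σe : Equiv.Perm (Fin n) := Equiv.ofBijective σ hσbij with hσe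
      have hcomp : (fun i => b (s.orderEmbOfFin hcard i)) ∘ σe = fun i => b (r i) := by
        funext i
        have : (s.orderEmbOfFin hcard) (σe i) = r i := by
          show ((s.orderIsoOfFin hcard) (σ i) : Fin d) = r i
          rw [hσ]; simp
        simp [Function.comp, this]
      have hperm := (ιMulti k n (M := M)).map_perm
        (fun i => b (s.orderEmbOfFin hcard i)) σe
      rw [hcomp] at hperm
      rw [hperm]
      rcases Int.units_eq_one_or (Equiv.Perm.sign σe) with h1 | h1 <;> rw [h1]
      · rw [one_smul]
        exact Submodule.subset_span (Set.mem_range_self (⟨s, hcard⟩ :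
          {s : Finset (Fin d) // s.card = n}))
      · have : ((-1 : ℤˣ) • (ιMulti k n fun i => b (s.orderEmbOfFin hcard i))
            : ExteriorAlgebra k M)
            = -(ιMulti k n fun i => b (s.orderEmbOfFin hcard i)) := by
          rw [Units.smul_def]; norm_num
        rw [this]
        exact Submodule.neg_mem _ (Submodule.subset_span (Set.mem_range_self
          (⟨s, hcard⟩ : {s : Finset (Fin d) // s.card = n})))
    · have : ¬ Function.Injective (fun i => b (r i)) := by
        intro hinj
        exact hr fun a a' haa' => hinj (show b (r a) = b (r a') by rw [haa'])
      rw [AlternatingMap.map_eq_zero_of_not_injective _ _ this]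
      exact Submodule.zero_mem _

/-- A basis of the `n`-th exterior power indexed by `n`-element subsets of `Fin d`. -/
noncomputable def extPowerBasis {d n : ℕ} (b : Module.Basis (Fin d) k M) :
    Module.Basis {s : Finset (Fin d) // s.card = n} k (⋀[k]^n M) := by
  refine Module.Basis.mk (v := fun s => (⟨extFam b s,
    ιMulti_range k n (Set.mem_range_self _)⟩ : ⋀[k]^n M)) ?_ ?_
  · apply LinearIndependent.of_comp (⋀[k]^n M).subtype
    convert extFam_li b <;> rfl
  · have hmap : Submodule.map (⋀[k]^n M).subtype
        (Submodule.span k (Set.range fun s => (⟨extFam b s,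
          ιMulti_range k n (Set.mem_range_self _)⟩ : ⋀[k]^n M)))
        = Submodule.map (⋀[k]^n M).subtype ⊤ := by
      rw [Submodule.map_span, Submodule.map_subtype_top, ← Set.range_comp]
      exact extFam_span b
    exact (Submodule.map_injective_of_injective
      (show Function.Injective (⋀[k]^n M).subtype from Subtype.coe_injective) hmap).ge

lemma finiteDimensional_extPower [FiniteDimensional k M] (n : ℕ) :
    FiniteDimensional k (⋀[k]^n M) :=
  Module.Finite.of_basis (extPowerBasis (Module.finBasis k M) (n := n))

lemma finrank_extPower [FiniteDimensional k M] (n : ℕ) :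
    Module.finrank k (⋀[k]^n M) = (Module.finrank k M).choose n := by
  rw [Module.finrank_eq_card_basis (extPowerBasis (Module.finBasis k M) (n := n)),
    Fintype.card_finset_len, Fintype.card_fin]

end ExtDim

section SymSqDim

variable (k : Type*) [Field k] (U : Type*) [AddCommGroup U] [Module k U]

/-- The antisymmetric submodule of `U ⊗ U`. -/
noncomputable abbrev symW : Submodule k (U ⊗[k] U) :=
  Submodule.span k {x : U ⊗[k] U | ∃ u v : U, x = u ⊗ₜ[k] v - v ⊗ₜ[k] u}

/-- The bilinear map `(u, v) ↦ u ⊗ v - v ⊗ u`. -/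
noncomputable def symT : U →ₗ[k] U →ₗ[k] U ⊗[k] U :=
  LinearMap.mk₂ k (fun u v => u ⊗ₜ[k] v - v ⊗ₜ[k] u)
    (fun u u' v => by simp [add_tmul, tmul_add]; abel)
    (fun c u v => by simp [smul_tmul', tmul_smul, smul_sub])
    (fun u v v' => by simp [add_tmul, tmul_add]; abel)
    (fun c u v => by simp [smul_tmul', tmul_smul, smul_sub])

variable {k U}

/-- The family spanning `symW`, indexed by 2-element subsets of `Fin d`. -/
noncomputable def wFam {d : ℕ} (b : Module.Basis (Fin d) k U)
    (s : {s : Finset (Fin d) // s.card = 2}) : U ⊗[k] U :=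
  symT k U (b (s.1.orderEmbOfFin s.2 0)) (b (s.1.orderEmbOfFin s.2 1))

lemma wFam_li {d : ℕ} (b : Module.Basis (Fin d) k U) : LinearIndependent k (wFam b) := by
  classical
  rw [Fintype.linearIndependent_iff]
  intro g hg s₀
  set B := b.tensorProduct b with hB
  set p₀ : Fin d × Fin d := (s₀.1.orderEmbOfFin s₀.2 0, s₀.1.orderEmbOfFin s₀.2 1) with hp₀
  have hlt : ∀ (s : {s : Finset (Fin d) // s.card = 2}),
      s.1.orderEmbOfFin s.2 0 < s.1.orderEmbOfFin s.2 1 :=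
    fun s => (s.1.orderEmbOfFin s.2).strictMono (show (0 : Fin 2) < 1 by decide)
  have h1 : ∀ i j : Fin d, B.coord p₀ (b i ⊗ₜ[k] b j)
      = if (i, j) = p₀ then 1 else 0 := by
    intro i j
    rw [Module.Basis.coord_apply, hB, ← Module.Basis.tensorProduct_apply, Module.Basis.repr_self,
      Finsupp.single_apply]
  have key : ∀ s, B.coord p₀ (wFam b s) = if s = s₀ then 1 else 0 := by
    intro s
    have hne2 : ((s.1.orderEmbOfFin s.2 1, s.1.orderEmbOfFin s.2 0) : Fin d × Fin d)
        ≠ p₀ := by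
      intro hc
      rw [hp₀, Prod.mk.injEq] at hc
      obtain ⟨h2, h3⟩ := hc
      have hchain := hlt s
      rw [h2, h3] at hchain
      exact absurd (hlt s₀) (not_lt_of_gt hchain)
    rw [wFam, symT, LinearMap.mk₂_apply, map_sub, h1, h1, if_neg hne2, sub_zero]
    by_cases hss : s = s₀
    · subst hss
      rw [if_pos (by rw [hp₀]), if_pos rfl]
    · have hne1 : ((s.1.orderEmbOfFin s.2 0, s.1.orderEmbOfFin s.2 1) : Fin d × Fin d)
          ≠ p₀ := by
        intro hc
        rw [hp₀, Prod.mk.injEq] at hc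
        obtain ⟨h2, h3⟩ := hc
        apply hss
        have hfun : ⇑(s.1.orderEmbOfFin s.2) = ⇑(s₀.1.orderEmbOfFin s₀.2) := by
          funext i
          have : i = 0 ∨ i = 1 := by omega
          rcases this with h | h <;> subst h
          · exact h2
          · exact h3
        have hset : (s.1 : Set (Fin d)) = (s₀.1 : Set (Fin d)) := by
          rw [← Finset.range_orderEmbOfFin s.1 s.2, ← Finset.range_orderEmbOfFin s₀.1 s₀.2,
            hfun]
        exact Subtype.ext (Finset.coe_injective hset)
      rw [if_neg hne1, if_neg hss]
  have h0 := congrArg (B.coord p₀) hg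
  rw [map_sum, map_zero] at h0
  simp only [map_smul, key, smul_eq_mul, mul_ite, mul_one, mul_zero] at h0
  rw [Finset.sum_ite_eq' Finset.univ s₀ g] at h0
  simpa using h0

lemma wFam_span {d : ℕ} (b : Module.Basis (Fin d) k U) :
    Submodule.span k (Set.range (wFam b)) = symW k U := by
  classical
  apply le_antisymm
  · rw [Submodule.span_le]
    rintro _ ⟨s, rfl⟩
    exact Submodule.subset_span ⟨_, _, rfl⟩
  · rw [Submodule.span_le]
    rintro _ ⟨u, v, rfl⟩
    have base : ∀ i j : Fin d, i < j → symT k U (b i) (b j) ∈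
        Submodule.span k (Set.range (wFam b)) := by
      intro i j hij
      have hne : i ≠ j := ne_of_lt hij
      have hcard : ({i, j} : Finset (Fin d)).card = 2 := by
        rw [Finset.card_insert_of_notMem (by simpa using hne), Finset.card_singleton]
      have huniq : ![i, j] = ⇑(({i, j} : Finset (Fin d)).orderEmbOfFin hcard) := by
        apply Finset.orderEmbOfFin_unique hcard
        · intro x
          have : x = 0 ∨ x = 1 := by omega
          rcases this with h | h <;> subst h <;> simp
        · intro a c hac
          have ha : a = 0 ∨ a = 1 := by omega
          have hc : c = 0 ∨ c = 1 := by omega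
          rcases ha with h | h <;> subst h <;> rcases hc with h | h <;> subst h <;>
            first
              | exact absurd hac (lt_irrefl _)
              | simpa using hij
              | exact absurd hac (by decide)
      have h0 : ({i, j} : Finset (Fin d)).orderEmbOfFin hcard 0 = i := by
        rw [← huniq]; rfl
      have h1 : ({i, j} : Finset (Fin d)).orderEmbOfFin hcard 1 = j := by
        rw [← huniq]; rfl
      have heq : symT k U (b i) (b j) = wFam b ⟨{i, j}, hcard⟩ := by
        rw [wFam, h0, h1]
      rw [heq]
      exact Submodule.subset_span (Set.mem_range_self _)
    have step1 : ∀ i j : Fin d, symT k U (b i) (b j) ∈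
        Submodule.span k (Set.range (wFam b)) := by
      intro i j
      rcases lt_trichotomy i j with hij | hij | hij
      · exact base i j hij
      · subst hij
        rw [symT, LinearMap.mk₂_apply, sub_self]
        exact Submodule.zero_mem _
      · have : symT k U (b i) (b j) = -(symT k U (b j) (b i)) := by
          rw [symT, LinearMap.mk₂_apply, LinearMap.mk₂_apply, neg_sub]
        rw [this]
        exact Submodule.neg_mem _ (base j i hij)
    have step2 : ∀ (u' : U) (j : Fin d), symT k U u' (b j) ∈
        Submodule.span k (Set.range (wFam b)) := by
      intro u' j
      have hexp : symT k U u' (b j) = ∑ i, b.repr u' i • symT k U (b i) (b j) := by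
        conv_lhs => rw [← b.sum_repr u']
        rw [map_sum, LinearMap.sum_apply]; simp only [map_smul, LinearMap.smul_apply]
      rw [hexp]
      exact Submodule.sum_mem _ fun i _ => Submodule.smul_mem _ _ (step1 i j)
    have hexp : symT k U u v = ∑ j, b.repr v j • symT k U u (b j) := by
      conv_lhs => rw [← b.sum_repr v]
      rw [map_sum]; simp only [map_smul]
    show symT k U u v ∈ Submodule.span k (Set.range (wFam b))
    rw [hexp]
    exact Submodule.sum_mem _ fun j _ => Submodule.smul_mem _ _ (step2 u j)

end SymSqDim

section Finranks

variable {k : Type*} [Field k] {U : Type*} [AddCommGroup U] [Module k U]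

noncomputable def symWBasis {d : ℕ} (b : Module.Basis (Fin d) k U) :
    Module.Basis {s : Finset (Fin d) // s.card = 2} k (symW k U) := by
  refine Module.Basis.mk (v := fun s => (⟨wFam b s, (wFam_span b).le
    (Submodule.subset_span (Set.mem_range_self s))⟩ : symW k U)) ?_ ?_
  · apply LinearIndependent.of_comp (symW k U).subtype
    convert wFam_li b <;> rfl
  · have hmap : Submodule.map (symW k U).subtype
        (Submodule.span k (Set.range fun s => (⟨wFam b s, (wFam_span b).le
          (Submodule.subset_span (Set.mem_range_self s))⟩ : symW k U)))
        = Submodule.map (symW k U).subtype ⊤ := by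
      rw [Submodule.map_span, Submodule.map_subtype_top, ← Set.range_comp]
      exact wFam_span b
    exact (Submodule.map_injective_of_injective
      (show Function.Injective (symW k U).subtype from Subtype.coe_injective) hmap).ge

lemma finrank_symW [FiniteDimensional k U] :
    Module.finrank k (symW k U) = (Module.finrank k U).choose 2 := by
  rw [Module.finrank_eq_card_basis (symWBasis (Module.finBasis k U)),
    Fintype.card_finset_len, Fintype.card_fin]

end Finranks

noncomputable instance (k U : Type*) [Field k] [AddCommGroup U] [Module k U]
    [FiniteDimensional k U] : FiniteDimensional k (SymSq k U) :=
  inferInstanceAs (FiniteDimensional k ((U ⊗[k] U) ⧸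
    (Submodule.span k {x : U ⊗[k] U | ∃ u v : U, x = u ⊗ₜ[k] v - v ⊗ₜ[k] u})))

lemma finrank_symSq (k U : Type*) [Field k] [AddCommGroup U] [Module k U]
    [FiniteDimensional k U] :
    Module.finrank k (SymSq k U) =
      Module.finrank k U * Module.finrank k U - (Module.finrank k U).choose 2 := by
  have h := Submodule.finrank_quotient_add_finrank (symW k U)
  have h2 : Module.finrank k (SymSq k U)
      = Module.finrank k ((U ⊗[k] U) ⧸ symW k U) := rfl
  rw [Module.finrank_tensorProduct] at h
  rw [h2]
  rw [finrank_symW] at h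
  omega

lemma nat_choose_identity (u v : ℕ) :
    (u * v).choose 2 =
      (u * u - u.choose 2) * v.choose 2 + u.choose 2 * (v * v - v.choose 2) := by
  have hle : ∀ n : ℕ, n.choose 2 ≤ n * n := by
    intro n
    rw [Nat.choose_two_right]
    exact le_trans (Nat.div_le_self _ _) (Nat.mul_le_mul_left n (Nat.sub_le n 1))
  have key : (((u * v).choose 2 : ℚ)) =
      (((u * u - u.choose 2) * v.choose 2 + u.choose 2 * (v * v - v.choose 2) : ℕ) : ℚ) := by
    push_cast [Nat.cast_sub (hle u), Nat.cast_sub (hle v), Nat.cast_choose_two]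
    field_simp
    ring
  exact_mod_cast key

/-- For finite-dimensional vector spaces `U`, `V` over a field of characteristic zero,
`dim Λⁿ(U ⊗ V) = (dim(U ⊗ V)).choose n`, and moreover
`Λ²(U ⊗ V) ≅ (Sym²U ⊗ Λ²V) ⊕ (Λ²U ⊗ Sym²V)` (the `n = 2` Cauchy decomposition). -/
theorem exteriorPower_tensor (k U V : Type*) [Field k] [CharZero k]
    [AddCommGroup U] [Module k U] [AddCommGroup V] [Module k V]
    [FiniteDimensional k U] [FiniteDimensional k V] (n : ℕ) :
    Module.finrank k (⋀[k]^n (U ⊗[k] V)) =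
        Nat.choose (Module.finrank k (U ⊗[k] V)) n ∧
      Nonempty ((⋀[k]^2 (U ⊗[k] V)) ≃ₗ[k]
        ((SymSq k U ⊗[k] ↥(⋀[k]^2 V)) × (↥(⋀[k]^2 U) ⊗[k] SymSq k V))) := by
  haveI : FiniteDimensional k (⋀[k]^2 (U ⊗[k] V)) := finiteDimensional_extPower 2
  haveI : FiniteDimensional k (⋀[k]^2 U) := finiteDimensional_extPower 2
  haveI : FiniteDimensional k (⋀[k]^2 V) := finiteDimensional_extPower 2
  constructor
  · exact finrank_extPower n
  · exact ⟨LinearEquiv.ofFinrankEq (R := k) (↥(⋀[k]^2 (U ⊗[k] V)))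
      ((SymSq k U ⊗[k] ↥(⋀[k]^2 V)) × (↥(⋀[k]^2 U) ⊗[k] SymSq k V)) (by
      rw [finrank_extPower, Module.finrank_prod, Module.finrank_tensorProduct (M := SymSq k U),
        Module.finrank_tensorProduct (M := (⋀[k]^2 U : Submodule k (ExteriorAlgebra k U))),
        finrank_symSq, finrank_symSq, finrank_extPower, finrank_extPower,
        Module.finrank_tensorProduct]
      exact nat_choose_identity _ _)⟩
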